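/- Let S be a Γ-semigroup and γ₀ ∈ Γ such that S_{γ₀} is a simple semigroup. Then Σ' = Σ \ Γ (the elements of Σ represented by words of the forms x, γx, xγ, γxγ') is a simple subsemigroup of Σ: its only two-sided ideal is Σ' itself. -/

import Mathlib

open FreeSemigroup

section GammaSemigroup

variable {S Γ : Type}

/-- One-step rewriting on words over S ⊕ Γ. -/
inductive GStep (m : S → Γ → S → S) (γ₀ : Γ) : List (S ⊕ Γ) → List (S ⊕ Γ) → Prop
  | gg (u v : List (S ⊕ Γ)) (γ₁ γ₂ : Γ) :
      GStep m γ₀ (u ++ Sum.inr γ₁ :: Sum.inr γ₂ :: v) (u ++ Sum.inr γ₁ :: v)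
  | xgy (u v : List (S ⊕ Γ)) (x : S) (γ : Γ) (y : S) :
      GStep m γ₀ (u ++ Sum.inl x :: Sum.inr γ :: Sum.inl y :: v) (u ++ Sum.inl (m x γ y) :: v)
  | xy (u v : List (S ⊕ Γ)) (x y : S) :
      GStep m γ₀ (u ++ Sum.inl x :: Sum.inl y :: v) (u ++ Sum.inl (m x γ₀ y) :: v)

/-- The defining relations on the free semigroup on S ⊕ Γ. -/
def GRel (m : S → Γ → S → S) (γ₀ : Γ) :
    FreeSemigroup (S ⊕ Γ) → FreeSemigroup (S ⊕ Γ) → Prop :=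
  fun a b =>
    (∃ γ₁ γ₂ : Γ, a = of (Sum.inr γ₁) * of (Sum.inr γ₂) ∧ b = of (Sum.inr γ₁)) ∨
    (∃ (x y : S) (γ : Γ), a = of (Sum.inl x) * of (Sum.inr γ) * of (Sum.inl y) ∧
      b = of (Sum.inl (m x γ y))) ∨
    (∃ x y : S, a = of (Sum.inl x) * of (Sum.inl y) ∧ b = of (Sum.inl (m x γ₀ y)))

/-- The congruence generated by the defining relations. -/
def GCon (m : S → Γ → S → S) (γ₀ : Γ) : Con (FreeSemigroup (S ⊕ Γ)) := conGen (GRel m γ₀)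

/-- The universal semigroup Σ of the Γ-semigroup S. -/
abbrev USem (m : S → Γ → S → S) (γ₀ : Γ) := (GCon m γ₀).Quotient

/-- The canonical map μ : S → Σ. -/
def gmu (m : S → Γ → S → S) (γ₀ : Γ) (x : S) : USem m γ₀ :=
  ((of (Sum.inl x) : FreeSemigroup (S ⊕ Γ)) : (GCon m γ₀).Quotient)

/-- The canonical map Γ → Σ. -/
def giota (m : S → Γ → S → S) (γ₀ : Γ) (γ : Γ) : USem m γ₀ :=
  ((of (Sum.inr γ) : FreeSemigroup (S ⊕ Γ)) : (GCon m γ₀).Quotient)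

/-- Principal left ideal of an element of a semigroup. -/
def pLeft {T : Type} [Semigroup T] (a : T) : Set T := {w | ∃ t : T, w = t * a} ∪ {a}

/-- Principal right ideal of an element of a semigroup. -/
def pRight {T : Type} [Semigroup T] (a : T) : Set T := {w | ∃ t : T, w = a * t} ∪ {a}

/-- Principal left ideal in the Γ-semigroup: SΓx ∪ {x}. -/
def pLeftG (m : S → Γ → S → S) (x : S) : Set S := {y | ∃ (s : S) (γ : Γ), y = m s γ x} ∪ {x}

/-- Principal right ideal in the Γ-semigroup: xΓS ∪ {x}. -/
def pRightG (m : S → Γ → S → S) (x : S) : Set S := {y | ∃ (γ : Γ) (s : S), y = m x γ s} ∪ {x}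

/-- Green's H relation on the Γ-semigroup. -/
def HrelG (m : S → Γ → S → S) (a b : S) : Prop := pLeftG m a = pLeftG m b ∧ pRightG m a = pRightG m b

/-- S_δ is a simple semigroup: its only two-sided ideal is S itself. -/
def SimpleAt (m : S → Γ → S → S) (δ : Γ) : Prop :=
  ∀ J : Set S, J.Nonempty → (∀ t : S, ∀ j ∈ J, m t δ j ∈ J ∧ m j δ t ∈ J) → J = Set.univ

/-- e is an idempotent of S_δ. -/
def IdemAt (m : S → Γ → S → S) (δ : Γ) (e : S) : Prop := m e δ e = e

/-- e is a primitive idempotent of S_δ. -/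
def PrimAt (m : S → Γ → S → S) (δ : Γ) (e : S) : Prop :=
  IdemAt m δ e ∧ ∀ f, IdemAt m δ f → m e δ f = f → m f δ e = f → f = e

/-- S_δ is completely simple. -/
def CSimpleAt (m : S → Γ → S → S) (δ : Γ) : Prop := SimpleAt m δ ∧ ∃ e, PrimAt m δ e

/-- S_δ has no zero element. -/
def NoZeroAt (m : S → Γ → S → S) (δ : Γ) : Prop := ¬ ∃ z : S, ∀ t : S, m z δ t = z ∧ m t δ z = z

/-- L is a left ideal of S_δ. -/
def LIdealAt (m : S → Γ → S → S) (δ : Γ) (L : Set S) : Prop :=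
  L.Nonempty ∧ ∀ t : S, ∀ l ∈ L, m t δ l ∈ L

/-- L is a minimal left ideal of S_δ. -/
def MinLIdealAt (m : S → Γ → S → S) (δ : Γ) (L : Set S) : Prop :=
  LIdealAt m δ L ∧ ∀ L' ⊆ L, LIdealAt m δ L' → L' = L

/-- S_δ is a group. -/
def GroupAt (m : S → Γ → S → S) (δ : Γ) : Prop :=
  ∃ e : S, (∀ a, m e δ a = a ∧ m a δ e = a) ∧ ∀ a, ∃ b, m a δ b = e ∧ m b δ a = e

/-- G is a subgroup (a sub-semigroup that is a group) of the semigroup T. -/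
def IsSubgroupOf {T : Type} [Semigroup T] (G : Set T) : Prop :=
  (∀ a ∈ G, ∀ b ∈ G, a * b ∈ G) ∧
  ∃ e ∈ G, (∀ g ∈ G, e * g = g ∧ g * e = g) ∧ ∀ g ∈ G, ∃ h ∈ G, g * h = e ∧ h * g = e

/-- The set Σ' = Σ \ Γ. -/
def USem' (m : S → Γ → S → S) (γ₀ : Γ) : Set (USem m γ₀) := {w | ¬ ∃ γ : Γ, w = giota m γ₀ γ}

end GammaSemigroup

section NFAux

variable {S Γ : Type}


inductive NF (S Γ : Type) : Type
  | g : Γ → NF S Γ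
  | e : S → NF S Γ
  | l : Γ → S → NF S Γ
  | r : S → Γ → NF S Γ
  | b : Γ → S → Γ → NF S Γ

def nmul (m : S → Γ → S → S) (γ₀ : Γ) : NF S Γ → NF S Γ → NF S Γ
  | .g γ, .g _ => .g γ
  | .g γ, .e x => .l γ x
  | .g γ, .l _ x => .l γ x
  | .g γ, .r x γ' => .b γ x γ'
  | .g γ, .b _ x γ'' => .b γ x γ''
  | .e x, .g γ => .r x γ
  | .e x, .e y => .e (m x γ₀ y)
  | .e x, .l γ y => .e (m x γ y)
  | .e x, .r y γ => .r (m x γ₀ y) γ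
  | .e x, .b γ y γ' => .r (m x γ y) γ'
  | .l γ x, .g γ' => .b γ x γ'
  | .l γ x, .e y => .l γ (m x γ₀ y)
  | .l γ x, .l γ' y => .l γ (m x γ' y)
  | .l γ x, .r y γ' => .b γ (m x γ₀ y) γ'
  | .l γ x, .b γ' y γ'' => .b γ (m x γ' y) γ''
  | .r x γ, .g _ => .r x γ
  | .r x γ, .e y => .e (m x γ y)
  | .r x γ, .l _ y => .e (m x γ y)
  | .r x γ, .r y γ' => .r (m x γ y) γ'
  | .r x γ, .b _ y γ'' => .r (m x γ y) γ''
  | .b γ x γ', .g _ => .b γ x γ'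
  | .b γ x γ', .e y => .l γ (m x γ' y)
  | .b γ x γ', .l _ y => .l γ (m x γ' y)
  | .b γ x γ', .r y γ'' => .b γ (m x γ' y) γ''
  | .b γ x γ', .b _ y γ''' => .b γ (m x γ' y) γ'''

variable (m : S → Γ → S → S) (γ₀ : Γ)

lemma nmul_assoc (assoc : ∀ (a b c : S) (α β : Γ), m (m a α b) β c = m a α (m b β c))
    (a b c : NF S Γ) :
    nmul m γ₀ (nmul m γ₀ a b) c = nmul m γ₀ a (nmul m γ₀ b c) := by
  cases a <;> cases b <;> cases c <;> simp [nmul, assoc]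

/-- The atom map. -/
def natom : S ⊕ Γ → NF S Γ := Sum.elim NF.e NF.g

/-- Normal form of a word. -/
def phi (f : FreeSemigroup (S ⊕ Γ)) : NF S Γ :=
  f.tail.foldl (fun n a => nmul m γ₀ n (natom a)) (natom f.head)

variable (assoc : ∀ (a b c : S) (α β : Γ), m (m a α b) β c = m a α (m b β c))

include assoc in
lemma foldl_nmul (l : List (S ⊕ Γ)) : ∀ n₁ n₂ : NF S Γ,
    l.foldl (fun n a => nmul m γ₀ n (natom a)) (nmul m γ₀ n₁ n₂) =
      nmul m γ₀ n₁ (l.foldl (fun n a => nmul m γ₀ n (natom a)) n₂) := by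
  induction l with
  | nil => intro n₁ n₂; rfl
  | cons a l ih =>
    intro n₁ n₂
    simp only [List.foldl_cons, nmul_assoc m γ₀ assoc, ih]

lemma phi_of (a : S ⊕ Γ) : phi m γ₀ (of a) = natom a := rfl

include assoc in
lemma phi_mul (x y : FreeSemigroup (S ⊕ Γ)) :
    phi m γ₀ (x * y) = nmul m γ₀ (phi m γ₀ x) (phi m γ₀ y) := by
  show (x.tail ++ y.head :: y.tail).foldl _ _ = _
  rw [List.foldl_append]
  show (y.head :: y.tail).foldl _ (phi m γ₀ x) = _
  rw [List.foldl_cons]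
  exact foldl_nmul m γ₀ assoc y.tail _ _

include assoc in
lemma phi_resp : ∀ a b, GCon m γ₀ a b → phi m γ₀ a = phi m γ₀ b := by
  letI : Mul (NF S Γ) := ⟨nmul m γ₀⟩
  have h : GCon m γ₀ ≤ Con.ker (⟨phi m γ₀, phi_mul m γ₀ assoc⟩ : MulHom (FreeSemigroup (S ⊕ Γ)) (NF S Γ)) := by
    apply Con.conGen_le.2
    rintro a b (⟨γ₁, γ₂, rfl, rfl⟩ | ⟨x, y, γ, rfl, rfl⟩ | ⟨x, y, rfl, rfl⟩) <;>
      show phi m γ₀ _ = phi m γ₀ _ <;>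
      simp only [phi_mul m γ₀ assoc, phi_of, natom, Sum.elim_inl, Sum.elim_inr] <;> rfl
  exact fun a b hab => h hab

def psi (w : USem m γ₀) : NF S Γ :=
  Con.liftOn w (phi m γ₀) (phi_resp m γ₀ assoc)

lemma psi_coe (f : FreeSemigroup (S ⊕ Γ)) :
    psi m γ₀ assoc (f : USem m γ₀) = phi m γ₀ f := rfl

include assoc in
lemma psi_mul (w v : USem m γ₀) :
    psi m γ₀ assoc (w * v) = nmul m γ₀ (psi m γ₀ assoc w) (psi m γ₀ assoc v) := by
  induction w using Con.induction_on with
  | _ a =>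
  induction v using Con.induction_on with
  | _ b =>
  rw [← Con.coe_mul, psi_coe, psi_coe, psi_coe, phi_mul m γ₀ assoc]

lemma psi_gmu (x : S) : psi m γ₀ assoc (gmu m γ₀ x) = NF.e x := rfl
lemma psi_giota (γ : Γ) : psi m γ₀ assoc (giota m γ₀ γ) = NF.g γ := rfl

def theta : NF S Γ → USem m γ₀
  | .g γ => giota m γ₀ γ
  | .e x => gmu m γ₀ x
  | .l γ x => giota m γ₀ γ * gmu m γ₀ x
  | .r x γ => gmu m γ₀ x * giota m γ₀ γ
  | .b γ x γ' => giota m γ₀ γ * gmu m γ₀ x * giota m γ₀ γ'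

lemma rel_of {a b : FreeSemigroup (S ⊕ Γ)} (h : GRel m γ₀ a b) :
    (a : USem m γ₀) = (b : USem m γ₀) :=
  (Con.eq _).2 (ConGen.Rel.of _ _ h)

lemma rgg (γ γ' : Γ) : giota m γ₀ γ * giota m γ₀ γ' = giota m γ₀ γ := by
  rw [giota, giota, ← Con.coe_mul]
  exact rel_of m γ₀ (Or.inl ⟨γ, γ', rfl, rfl⟩)

lemma rxy (x y : S) : gmu m γ₀ x * gmu m γ₀ y = gmu m γ₀ (m x γ₀ y) := by
  rw [gmu, gmu, ← Con.coe_mul]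
  exact rel_of m γ₀ (Or.inr (Or.inr ⟨x, y, rfl, rfl⟩))

lemma rxgy (x y : S) (γ : Γ) :
    gmu m γ₀ x * giota m γ₀ γ * gmu m γ₀ y = gmu m γ₀ (m x γ y) := by
  rw [gmu, gmu, giota, ← Con.coe_mul, ← Con.coe_mul]
  exact rel_of m γ₀ (Or.inr (Or.inl ⟨x, y, γ, rfl, rfl⟩))

lemma rgg' (γ γ' : Γ) (z : USem m γ₀) :
    giota m γ₀ γ * (giota m γ₀ γ' * z) = giota m γ₀ γ * z := by
  rw [← mul_assoc, rgg]

lemma rxy' (x y : S) (z : USem m γ₀) :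
    gmu m γ₀ x * (gmu m γ₀ y * z) = gmu m γ₀ (m x γ₀ y) * z := by
  rw [← mul_assoc, rxy]

lemma rxgy₁ (x y : S) (γ : Γ) :
    gmu m γ₀ x * (giota m γ₀ γ * gmu m γ₀ y) = gmu m γ₀ (m x γ y) := by
  rw [← mul_assoc, rxgy]

lemma rxgy' (x y : S) (γ : Γ) (z : USem m γ₀) :
    gmu m γ₀ x * (giota m γ₀ γ * (gmu m γ₀ y * z)) = gmu m γ₀ (m x γ y) * z := by
  rw [← mul_assoc, ← mul_assoc, rxgy]

lemma theta_mul (a b : NF S Γ) :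
    theta m γ₀ (nmul m γ₀ a b) = theta m γ₀ a * theta m γ₀ b := by
  cases a <;> cases b <;>
    simp [nmul, theta, mul_assoc, rgg, rxy, rxgy, rgg', rxy', rxgy₁, rxgy']

include assoc in
lemma theta_psi (w : USem m γ₀) : theta m γ₀ (psi m γ₀ assoc w) = w := by
  induction w using Con.induction_on with
  | _ f =>
  refine FreeSemigroup.recOnMul f ?_ ?_
  · intro a; cases a <;> rfl
  · intro x y ihx ihy
    rw [Con.coe_mul, psi_mul, theta_mul, ihx, ihy]

include assoc in
lemma mem_USem' (w : USem m γ₀) :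
    w ∈ USem' m γ₀ ↔ ∀ γ : Γ, psi m γ₀ assoc w ≠ NF.g γ := by
  constructor
  · rintro hw γ hγ
    exact hw ⟨γ, by rw [← theta_psi m γ₀ assoc w, hγ]; rfl⟩
  · rintro h ⟨γ, rfl⟩
    exact h γ rfl


end NFAux

theorem stmt (S Γ : Type) [Nonempty S] [Nonempty Γ] (m : S → Γ → S → S)
    (assoc : ∀ (a b c : S) (α β : Γ), m (m a α b) β c = m a α (m b β c)) (γ₀ : Γ) (hsimple : SimpleAt m γ₀) :
    (∀ a ∈ USem' m γ₀, ∀ b ∈ USem' m γ₀, a * b ∈ USem' m γ₀) ∧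
    (∀ J ⊆ USem' m γ₀, J.Nonempty →
      (∀ a ∈ USem' m γ₀, ∀ j ∈ J, a * j ∈ J ∧ j * a ∈ J) → J = USem' m γ₀) := by
  classical
  have hmem_e : ∀ x : S, gmu m γ₀ x ∈ USem' m γ₀ := fun x =>
    (mem_USem' m γ₀ assoc _).2 (fun γ h => by rw [psi_gmu] at h; cases h)
  have hmem_l : ∀ (γ : Γ) (x : S), giota m γ₀ γ * gmu m γ₀ x ∈ USem' m γ₀ := fun γ x =>
    (mem_USem' m γ₀ assoc _).2 (fun γ' h => by
      rw [psi_mul, psi_giota, psi_gmu] at h; simp [nmul] at h)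
  have hmem_r : ∀ (x : S) (γ : Γ), gmu m γ₀ x * giota m γ₀ γ ∈ USem' m γ₀ := fun x γ =>
    (mem_USem' m γ₀ assoc _).2 (fun γ' h => by
      rw [psi_mul, psi_giota, psi_gmu] at h; simp [nmul] at h)
  have surj : ∀ x : S, ∃ s y, x = m s γ₀ y := by
    obtain ⟨s₀⟩ := ‹Nonempty S›
    have h := hsimple {x | ∃ s y, x = m s γ₀ y} ⟨m s₀ γ₀ s₀, s₀, s₀, rfl⟩
      (fun t j _ => ⟨⟨t, j, rfl⟩, ⟨j, t, rfl⟩⟩)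
    exact fun x => Set.eq_univ_iff_forall.1 h x
  constructor
  · -- closure of Σ' under multiplication
    intro a ha b hb
    rw [mem_USem' m γ₀ assoc] at ha hb ⊢
    intro γ
    rw [psi_mul]
    cases h1 : psi m γ₀ assoc a with
    | g γ₁ => exact absurd h1 (ha γ₁)
    | e x => cases h2 : psi m γ₀ assoc b <;> simp [nmul]
    | l γ₁ x => cases h2 : psi m γ₀ assoc b <;> simp [nmul]
    | r x γ₁ => cases h2 : psi m γ₀ assoc b <;> simp [nmul]
    | b γ₁ x γ₂ => cases h2 : psi m γ₀ assoc b <;> simp [nmul]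
  · -- simplicity
    rintro J hJsub ⟨j₀, hj₀⟩ hJ
    obtain ⟨s⟩ := ‹Nonempty S›
    -- Step 1: J contains some gmu x₀
    obtain ⟨x₀, hx₀⟩ : ∃ x, gmu m γ₀ x ∈ J := by
      have hvJ : gmu m γ₀ s * (j₀ * gmu m γ₀ s) ∈ J :=
        (hJ _ (hmem_e s) _ ((hJ _ (hmem_e s) _ hj₀).2)).1
      have hvt := theta_psi m γ₀ assoc (gmu m γ₀ s * (j₀ * gmu m γ₀ s))
      have hpsiv : psi m γ₀ assoc (gmu m γ₀ s * (j₀ * gmu m γ₀ s)) =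
          nmul m γ₀ (NF.e s) (nmul m γ₀ (psi m γ₀ assoc j₀) (NF.e s)) := by
        rw [psi_mul, psi_mul, psi_gmu]
      cases h : psi m γ₀ assoc j₀ with
      | g γ => exact absurd h ((mem_USem' m γ₀ assoc j₀).1 (hJsub hj₀) γ)
      | e x =>
        refine ⟨m s γ₀ (m x γ₀ s), ?_⟩
        rw [h] at hpsiv
        rw [hpsiv] at hvt
        rw [show theta m γ₀ (nmul m γ₀ (NF.e s) (nmul m γ₀ (NF.e x) (NF.e s))) =
            gmu m γ₀ (m s γ₀ (m x γ₀ s)) from rfl] at hvt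
        rwa [hvt]
      | l γ x =>
        refine ⟨m s γ (m x γ₀ s), ?_⟩
        rw [h] at hpsiv
        rw [hpsiv] at hvt
        rw [show theta m γ₀ (nmul m γ₀ (NF.e s) (nmul m γ₀ (NF.l γ x) (NF.e s))) =
            gmu m γ₀ (m s γ (m x γ₀ s)) from rfl] at hvt
        rwa [hvt]
      | r x γ =>
        refine ⟨m s γ₀ (m x γ s), ?_⟩
        rw [h] at hpsiv
        rw [hpsiv] at hvt
        rw [show theta m γ₀ (nmul m γ₀ (NF.e s) (nmul m γ₀ (NF.r x γ) (NF.e s))) =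
            gmu m γ₀ (m s γ₀ (m x γ s)) from rfl] at hvt
        rwa [hvt]
      | b γ x γ' =>
        refine ⟨m s γ (m x γ' s), ?_⟩
        rw [h] at hpsiv
        rw [hpsiv] at hvt
        rw [show theta m γ₀ (nmul m γ₀ (NF.e s) (nmul m γ₀ (NF.b γ x γ') (NF.e s))) =
            gmu m γ₀ (m s γ (m x γ' s)) from rfl] at hvt
        rwa [hvt]
    -- Step 2: all gmu x are in J
    have hall : ∀ x : S, gmu m γ₀ x ∈ J := by
      have h := hsimple {x | gmu m γ₀ x ∈ J} ⟨x₀, hx₀⟩ (by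
        intro t j hj
        constructor
        · show gmu m γ₀ (m t γ₀ j) ∈ J
          rw [← rxy]
          exact (hJ _ (hmem_e t) _ hj).1
        · show gmu m γ₀ (m j γ₀ t) ∈ J
          rw [← rxy]
          exact (hJ _ (hmem_e t) _ hj).2)
      exact fun x => Set.eq_univ_iff_forall.1 h x
    -- Step 3: J = Σ'
    apply Set.Subset.antisymm hJsub
    intro w hw
    have hw' := (mem_USem' m γ₀ assoc w).1 hw
    have htw := theta_psi m γ₀ assoc w
    cases h : psi m γ₀ assoc w with
    | g γ => exact absurd h (hw' γ)
    | e x =>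
      rw [h] at htw
      rw [← htw]
      exact hall x
    | l γ x =>
      rw [h] at htw
      obtain ⟨u, y, huy⟩ := surj x
      have heq : w = (giota m γ₀ γ * gmu m γ₀ u) * gmu m γ₀ y := by
        rw [← htw, huy]
        show giota m γ₀ γ * gmu m γ₀ (m u γ₀ y) = _
        rw [mul_assoc, rxy]
      rw [heq]
      exact (hJ _ (hmem_l γ u) _ (hall y)).1
    | r x γ =>
      rw [h] at htw
      obtain ⟨u, y, huy⟩ := surj x
      have heq : w = gmu m γ₀ u * (gmu m γ₀ y * giota m γ₀ γ) := by
        rw [← htw, huy]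
        show gmu m γ₀ (m u γ₀ y) * giota m γ₀ γ = _
        rw [← mul_assoc, rxy]
      rw [heq]
      exact (hJ _ (hmem_r y γ) _ (hall u)).2
    | b γ x γ' =>
      rw [h] at htw
      obtain ⟨u, z, huz⟩ := surj x
      obtain ⟨y, t, hyt⟩ := surj z
      have heq : w = ((giota m γ₀ γ * gmu m γ₀ u) * gmu m γ₀ y) * (gmu m γ₀ t * giota m γ₀ γ') := by
        rw [← htw, huz, hyt]
        show giota m γ₀ γ * gmu m γ₀ (m u γ₀ (m y γ₀ t)) * giota m γ₀ γ' = _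
        simp [mul_assoc, rxy', assoc]
      have h1 : (giota m γ₀ γ * gmu m γ₀ u) * gmu m γ₀ y ∈ J :=
        (hJ _ (hmem_l γ u) _ (hall y)).1
      rw [heq]
      exact (hJ _ (hmem_r t γ') _ h1).2
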